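/- Let k be a prime power and G a connected simple graph on n vertices with m edges with spanning tree T. Suppose (D, σ) is an S_{F_k}-labeling of G (D the canonical orientation) in which σ(e) is the identity for every e ∈ E(T). If (D, σ) has a proper coloring, then there is a polynomial f ∈ F_k[x₁,…,xₙ] of total degree at most (k−2)(m−n+1) + n − 1 such that f(a₁,…,aₙ) ≠ 0 implies (aᵢ)ᵢ is a proper coloring of (D, σ), and f is nonzero at some point of F_kⁿ. -/

import Mathlib

open Finset

lemma sum_univ_field_eq_zero (F : Type) [Field F] [Fintype F] (h3 : 3 ≤ Fintype.card F) :
    ∑ x : F, x = 0 := by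
  have := FiniteField.sum_pow_lt_card_sub_one F 1 (by omega)
  simpa using this

lemma interp_perm (F : Type) [Field F] [Fintype F] [DecidableEq F]
    (h3 : 3 ≤ Fintype.card F) (π : Equiv.Perm F) :
    ∃ h : Polynomial F, h.natDegree ≤ Fintype.card F - 2 ∧ ∀ c, h.eval c = π c := by
  set q := Fintype.card F with hq
  refine ⟨∑ c : F, Polynomial.C (π c) * (1 - (Polynomial.X - Polynomial.C c) ^ (q - 1)),
    ?_, ?_⟩
  · rw [Polynomial.natDegree_le_iff_coeff_eq_zero]
    intro N hN
    rw [Polynomial.finset_sum_coeff]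
    have hdeg : ∀ c : F, (Polynomial.C (π c) * (1 - (Polynomial.X - Polynomial.C c) ^ (q - 1))).natDegree ≤ q - 1 := by
      intro c
      refine (Polynomial.natDegree_mul_le).trans ?_
      simp only [Polynomial.natDegree_C, zero_add]
      refine (Polynomial.natDegree_sub_le _ _).trans ?_
      simp [Polynomial.natDegree_pow, Polynomial.natDegree_X_sub_C]
    rcases lt_or_ge (q-1) N with hN' | hN'
    · refine Finset.sum_eq_zero fun c _ => ?_
      exact Polynomial.coeff_eq_zero_of_natDegree_lt (lt_of_le_of_lt (hdeg c) hN')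
    · have hNe : N = q - 1 := by omega
      subst hNe
      have key : ∀ c : F, (Polynomial.C (π c) * (1 - (Polynomial.X - Polynomial.C c) ^ (q - 1))).coeff (q-1) = -(π c) := by
        intro c
        rw [Polynomial.coeff_C_mul, Polynomial.coeff_sub]
        have hm : ((Polynomial.X - Polynomial.C c) ^ (q - 1)).Monic := (Polynomial.monic_X_sub_C c).pow _
        have hnd : ((Polynomial.X - Polynomial.C c) ^ (q - 1)).natDegree = q - 1 := by
          simp [Polynomial.natDegree_pow, Polynomial.natDegree_X_sub_C]
        have : ((Polynomial.X - Polynomial.C c) ^ (q - 1)).coeff (q-1) = 1 := by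
          have := hm.coeff_natDegree
          rwa [hnd] at this
        rw [this, Polynomial.coeff_one, if_neg (by omega)]
        ring
      rw [Finset.sum_congr rfl fun c _ => key c, Finset.sum_neg_distrib,
        Equiv.sum_comp π (fun x => x), sum_univ_field_eq_zero F h3, neg_zero]
  · intro c
    rw [Polynomial.eval_finset_sum]
    rw [Finset.sum_eq_single c]
    · simp [zero_pow (show q - 1 ≠ 0 by omega)]
    · intro b _ hb
      have : (c - b) ≠ 0 := sub_ne_zero.mpr (by exact fun h => hb h.symm)
      simp [show (c - b) ^ (q - 1) = 1 from FiniteField.pow_card_sub_one_eq_one _ this]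
    · simp

lemma totalDegree_aeval_X_le {n : ℕ} (F : Type) [Field F] (h : Polynomial F) (u : Fin n) :
    (Polynomial.aeval (MvPolynomial.X u : MvPolynomial (Fin n) F) h).totalDegree ≤ h.natDegree := by
  rw [Polynomial.aeval_eq_sum_range]
  refine MvPolynomial.totalDegree_finsetSum_le fun i hi => ?_
  rw [MvPolynomial.smul_eq_C_mul]
  refine (MvPolynomial.totalDegree_mul _ _).trans ?_
  rw [MvPolynomial.totalDegree_C, zero_add]
  refine (MvPolynomial.totalDegree_pow _ _).trans ?_
  rw [MvPolynomial.totalDegree_X]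
  simpa [Nat.lt_succ_iff, mul_one] using Finset.mem_range.mp hi

lemma eval_aeval_X {n : ℕ} (F : Type) [Field F] (h : Polynomial F) (u : Fin n)
    (a : Fin n → F) :
    MvPolynomial.eval a (Polynomial.aeval (MvPolynomial.X u : MvPolynomial (Fin n) F) h)
      = Polynomial.eval (a u) h := by
  have := Polynomial.aeval_algHom_apply (MvPolynomial.aeval a
    : MvPolynomial (Fin n) F →ₐ[F] F) (MvPolynomial.X u) h
  simp only [MvPolynomial.aeval_X] at this
  have h2 : (MvPolynomial.eval a) (Polynomial.aeval (MvPolynomial.X u : MvPolynomial (Fin n) F) h)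
      = (MvPolynomial.aeval a) (Polynomial.aeval (MvPolynomial.X u : MvPolynomial (Fin n) F) h) := by
    rw [← MvPolynomial.coe_aeval_eq_eval]; rfl
  rw [h2, ← this, Polynomial.aeval_def, Polynomial.eval, Polynomial.eval₂_eq_sum,
    Polynomial.eval₂_eq_sum]
  rfl

lemma card_pairs {n : ℕ} (H : SimpleGraph (Fin n)) [DecidableRel H.Adj] :
    (Finset.univ.filter fun p : Fin n × Fin n => H.Adj p.1 p.2 ∧ p.1 < p.2).card
      = H.edgeFinset.card := by
  refine Finset.card_bij (fun p _ => s(p.1, p.2)) ?_ ?_ ?_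
  · rintro ⟨u, v⟩ hp
    simp only [Finset.mem_filter] at hp
    simpa [SimpleGraph.mem_edgeFinset] using hp.2.1
  · rintro ⟨u, v⟩ hp ⟨u', v'⟩ hp' he
    simp only [Finset.mem_filter] at hp hp'
    rw [Sym2.eq_iff] at he
    rcases he with ⟨rfl, rfl⟩ | ⟨rfl, rfl⟩
    · rfl
    · exact absurd (hp.2.2.trans hp'.2.2) (lt_irrefl _)
  · intro e he
    induction e with
    | _ u v =>
      rw [SimpleGraph.mem_edgeFinset, SimpleGraph.mem_edgeSet] at he
      rcases lt_or_gt_of_ne he.ne with h | h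
      · exact ⟨(u, v), Finset.mem_filter.mpr ⟨Finset.mem_univ _, he, h⟩, rfl⟩
      · exact ⟨(v, u), Finset.mem_filter.mpr ⟨Finset.mem_univ _, he.symm, h⟩, Sym2.eq_swap⟩

/-- Given a connected graph `G` on `Fin n` with `m` edges, a spanning tree
`T`, and an `S_{F_k}`-labeling `σ` that is the identity on tree edges, if a proper
coloring exists then there is a polynomial of total degree at most
`(k-2)(m-n+1) + n - 1` (written `(k-2)*(m+1-n) + n - 1` in `ℕ`) whose nonzeros are
proper colorings of the labeling, and which is nonzero somewhere. -/
theorem stmt_10 (k n m : ℕ) (hpp : IsPrimePow k) (F : Type) [Field F] [Fintype F]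
    (hcard : Fintype.card F = k)
    (G : SimpleGraph (Fin n)) [DecidableRel G.Adj] (hG : G.Connected)
    (hm : G.edgeFinset.card = m)
    (T : SimpleGraph (Fin n)) (hTG : T ≤ G) (hT : T.IsTree)
    (σ : Fin n → Fin n → Equiv.Perm F)
    (hσ : ∀ u v, σ v u = (σ u v)⁻¹)
    (hTid : ∀ u v, T.Adj u v → σ u v = 1)
    (hex : ∃ κ : Fin n → F, ∀ u v, G.Adj u v → σ u v (κ u) ≠ κ v) :
    ∃ f : MvPolynomial (Fin n) F,
      f.totalDegree ≤ (k - 2) * (m + 1 - n) + n - 1 ∧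
      (∀ a : Fin n → F, MvPolynomial.eval a f ≠ 0 →
        ∀ u v, G.Adj u v → σ u v (a u) ≠ a v) ∧
      ∃ a : Fin n → F, MvPolynomial.eval a f ≠ 0 := by
  classical
  obtain ⟨κ, hκ⟩ := hex
  have hk2 : 2 ≤ k := hpp.two_le
  have hne : Nonempty (Fin n) := hT.isConnected.nonempty
  have hn1 : 1 ≤ n := by
    have := Fintype.card_pos_iff.mpr hne
    simp only [Fintype.card_fin] at this; omega
  -- κ is proper on tree edges
  have hκT : ∀ u v, T.Adj u v → κ u ≠ κ v := by
    intro u v huv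
    have := hκ u v (hTG huv)
    rwa [hTid u v huv, Equiv.Perm.one_apply] at this
  -- the ordered pair sets
  set ST : Finset (Fin n × Fin n) :=
    Finset.univ.filter (fun p : Fin n × Fin n => T.Adj p.1 p.2 ∧ p.1 < p.2) with hSTdef
  set SG : Finset (Fin n × Fin n) :=
    Finset.univ.filter (fun p : Fin n × Fin n => G.Adj p.1 p.2 ∧ p.1 < p.2) with hSGdef
  have hSTsub : ST ⊆ SG := by
    intro p hp
    rw [hSTdef, Finset.mem_filter] at hp
    rw [hSGdef, Finset.mem_filter]
    exact ⟨hp.1, hTG hp.2.1, hp.2.2⟩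
  have hSTcard : ST.card = n - 1 := by
    have h1 := card_pairs T
    have h2 := hT.card_edgeFinset
    simp only [Fintype.card_fin] at h2
    rw [hSTdef]
    omega
  have hSGcard : SG.card = m := by
    have h1 := card_pairs G
    rw [hSGdef, h1, hm]
  have hmn : n - 1 ≤ m := by
    rw [← hSTcard, ← hSGcard]
    exact Finset.card_le_card hSTsub
  -- the tree polynomial
  set PT : MvPolynomial (Fin n) F :=
    ∏ p ∈ ST, (MvPolynomial.X p.1 - MvPolynomial.X p.2) with hPTdef
  have hPTdeg : PT.totalDegree ≤ n - 1 := by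
    refine (MvPolynomial.totalDegree_finset_prod _ _).trans ?_
    calc ∑ p ∈ ST, (MvPolynomial.X p.1 - MvPolynomial.X p.2 : MvPolynomial (Fin n) F).totalDegree
        ≤ ∑ _p ∈ ST, 1 := by
          refine Finset.sum_le_sum fun p _ => ?_
          refine (MvPolynomial.totalDegree_sub _ _).trans ?_
          simp [MvPolynomial.totalDegree_X]
      _ = n - 1 := by rw [Finset.sum_const, smul_eq_mul, mul_one, hSTcard]
  have hPTκ : MvPolynomial.eval κ PT ≠ 0 := by
    rw [hPTdef, map_prod]
    rw [Finset.prod_ne_zero_iff]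
    intro p hp
    rw [hSTdef, Finset.mem_filter] at hp
    simp only [map_sub, MvPolynomial.eval_X]
    exact sub_ne_zero.mpr (hκT _ _ hp.2.1)
  have hPTa : ∀ a : Fin n → F, MvPolynomial.eval a PT ≠ 0 →
      ∀ u v, T.Adj u v → a u ≠ a v := by
    intro a ha u v huv
    rw [hPTdef, map_prod, Finset.prod_ne_zero_iff] at ha
    have key : ∀ p ∈ ST, a p.1 ≠ a p.2 := by
      intro p hp
      have := ha p hp
      simp only [map_sub, MvPolynomial.eval_X] at this
      exact sub_ne_zero.mp this
    rcases lt_trichotomy u v with h | h | h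
    · exact key (u, v) (Finset.mem_filter.mpr ⟨Finset.mem_univ _, huv, h⟩)
    · exact absurd h huv.ne
    · exact (key (v, u) (Finset.mem_filter.mpr ⟨Finset.mem_univ _, huv.symm, h⟩)).symm
  -- reverse orientation
  have hrev : ∀ (a : Fin n → F) u v, σ u v (a u) ≠ a v → σ v u (a v) ≠ a u := by
    intro a u v h hc
    apply h
    rw [hσ u v] at hc
    rw [← hc]
    exact (σ u v).apply_symm_apply (a v)
  rcases lt_or_ge k 3 with hk3 | hk3
  · -- k = 2 case
    have hk : k = 2 := by omega
    have hcard2 : Fintype.card F = 2 := by rw [hcard, hk]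
    have h01 : ∀ x : F, x = 0 ∨ x = 1 := by
      intro x
      have hx := FiniteField.pow_card x
      rw [hcard2] at hx
      have hx2 : x * (x - 1) = 0 := by linear_combination hx
      rcases mul_eq_zero.mp hx2 with h | h
      · exact Or.inl h
      · exact Or.inr (sub_eq_zero.mp h)
    have hone : ∀ x y : F, x ≠ y → y = x + 1 := by
      intro x y hxy
      rcases h01 (y - x) with h | h
      · exact absurd (sub_eq_zero.mp h) (Ne.symm hxy)
      · linear_combination h
    have hchar : (1 : F) + 1 = 0 := by
      have := FiniteField.cast_card_eq_zero F
      rw [hcard2] at this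
      push_cast at this
      linear_combination this
    refine ⟨PT, ?_, ?_, κ, hPTκ⟩
    · exact hPTdeg.trans (by omega)
    · intro a ha u v huv
      have htreeProper := hPTa a ha
      have htree : ∀ u v, T.Adj u v → a u + κ u = a v + κ v := by
        intro u v huv
        have h1 : a v = a u + 1 := hone _ _ (htreeProper u v huv)
        have h2 : κ v = κ u + 1 := hone _ _ (hκT u v huv)
        rw [h1, h2]
        linear_combination -hchar
      have hwalk : ∀ u v : Fin n, a u + κ u = a v + κ v := by
        intro u v
        obtain ⟨w⟩ := hT.isConnected u v
        induction w with
        | nil => rfl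
        | cons h p ih => exact (htree _ _ h).trans ih
      have hx2 : ∀ x : F, x + x = 0 := by
        intro x
        calc x + x = x * (1 + 1) := by ring
          _ = 0 := by rw [hchar, mul_zero]
      have hau : a u = (a u + κ u) + κ u := by
        have := hx2 (κ u); linear_combination -this
      have hav : a v = (a u + κ u) + κ v := by
        have h1 := hwalk u v
        have := hx2 (κ v); linear_combination -h1 - this
      rcases h01 (a u + κ u) with ht | ht
      · rw [hau, hav, ht, zero_add, zero_add]
        exact hκ u v huv
      · rw [hau, hav, ht]
        have hne1 : σ u v (κ u) ≠ σ u v (1 + κ u) := by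
          intro h
          have := (σ u v).injective h
          have h10 : (1 : F) ≠ 0 := one_ne_zero
          apply h10
          linear_combination -this
        have heq : σ u v (1 + κ u) = σ u v (κ u) + 1 := hone _ _ hne1
        rw [heq]
        intro hc
        exact hκ u v huv (by linear_combination hc)
  · -- k ≥ 3 case
    have hcard3 : 3 ≤ Fintype.card F := by omega
    choose hp hpdeg hpeval using fun p : Fin n × Fin n => interp_perm F hcard3 (σ p.1 p.2)
    set SN : Finset (Fin n × Fin n) := SG \ ST with hSNdef
    set PN : MvPolynomial (Fin n) F :=
      ∏ p ∈ SN, (MvPolynomial.X p.2 -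
        Polynomial.aeval (MvPolynomial.X p.1) (hp p)) with hPNdef
    have hSNcard : SN.card = m - (n - 1) := by
      rw [hSNdef, Finset.card_sdiff_of_subset hSTsub, hSGcard, hSTcard]
    have hevalPN : ∀ (a : Fin n → F) p, MvPolynomial.eval a
        (MvPolynomial.X p.2 - Polynomial.aeval (MvPolynomial.X p.1) (hp p))
        = a p.2 - σ p.1 p.2 (a p.1) := by
      intro a p
      rw [map_sub, MvPolynomial.eval_X, eval_aeval_X, hpeval]
    have hPNdeg : PN.totalDegree ≤ (m - (n - 1)) * (k - 2) := by
      rw [hPNdef]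
      refine (MvPolynomial.totalDegree_finset_prod _ _).trans ?_
      calc ∑ p ∈ SN, (MvPolynomial.X p.2 -
            Polynomial.aeval (MvPolynomial.X p.1) (hp p) : MvPolynomial (Fin n) F).totalDegree
          ≤ ∑ _p ∈ SN, (k - 2) := by
            refine Finset.sum_le_sum fun p _ => ?_
            refine (MvPolynomial.totalDegree_sub _ _).trans ?_
            refine max_le ?_ ?_
            · rw [MvPolynomial.totalDegree_X]; omega
            · refine (totalDegree_aeval_X_le F _ _).trans ?_
              rw [← hcard]; exact hpdeg p
        _ = (m - (n-1)) * (k - 2) := by rw [Finset.sum_const, smul_eq_mul, hSNcard]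
    refine ⟨PT * PN, ?_, ?_, κ, ?_⟩
    · refine (MvPolynomial.totalDegree_mul _ _).trans ?_
      have := add_le_add hPTdeg hPNdeg
      refine this.trans ?_
      have : m - (n - 1) = m + 1 - n := by omega
      rw [this, mul_comm]
      omega
    · intro a ha u v huv
      rw [map_mul, mul_ne_zero_iff] at ha
      obtain ⟨haT, haN⟩ := ha
      have hdir : ∀ u v, G.Adj u v → u < v → σ u v (a u) ≠ a v := by
        intro u v huv hlt
        by_cases hTuv : T.Adj u v
        · rw [hTid u v hTuv, Equiv.Perm.one_apply]
          exact hPTa a haT u v hTuv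
        · have hmem : (u, v) ∈ SN := by
            rw [hSNdef, Finset.mem_sdiff, hSGdef, hSTdef]
            constructor
            · exact Finset.mem_filter.mpr ⟨Finset.mem_univ _, huv, hlt⟩
            · intro hc
              exact hTuv (Finset.mem_filter.mp hc).2.1
          rw [hPNdef, map_prod, Finset.prod_ne_zero_iff] at haN
          have := haN (u, v) hmem
          rw [hevalPN] at this
          exact fun hc => this (by rw [hc]; ring)
      rcases lt_trichotomy u v with h | h | h
      · exact hdir u v huv h
      · exact absurd h huv.ne
      · exact hrev a v u (hdir v u huv.symm h)
    · rw [map_mul]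
      refine mul_ne_zero hPTκ ?_
      rw [hPNdef, map_prod, Finset.prod_ne_zero_iff]
      intro p hpmem
      rw [hevalPN]
      have hpG : G.Adj p.1 p.2 := by
        rw [hSNdef, Finset.mem_sdiff, hSGdef, Finset.mem_filter] at hpmem
        exact hpmem.1.2.1
      exact fun hc => hκ p.1 p.2 hpG (by linear_combination -hc)
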